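/- For every dimension n ∈ ℕ and every C > 0 there exist constants c_M, C_M > 0, depending only on n and C, with the following property: for every non-degenerate n-simplex T ⊂ ℝⁿ satisfying (diam T)ⁿ ≤ C · |T| (where |T| is the n-dimensional volume), and every affine bijection A(x) = Mx + b mapping the reference simplex Δⁿ = conv{0, e₁, …, e_n} onto T, the invertible linear part M satisfies ‖M‖ ≤ c_M · diam T and ‖M⁻¹‖ ≤ C_M · (diam T)⁻¹, where ‖·‖ denotes the operator norm. -/

import Mathlib

open Set MeasureTheory Metric
open scoped ENNReal NNReal

noncomputable section

/-- Euclidean `n`-space. -/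
abbrev Euc (n : ℕ) : Type := EuclideanSpace ℝ (Fin n)

/-- The reference simplex `Δⁿ = conv{0, e₁, …, e_n}`. -/
def refSimplex (n : ℕ) : Set (Euc n) :=
  convexHull ℝ (insert 0 (Set.range fun i : Fin n => (EuclideanSpace.single i 1 : Euc n)))

/- ### Auxiliary lemmas -/

lemma euc_sum_single {n : ℕ} (x : Euc n) :
    ∑ i, x i • (EuclideanSpace.single i 1 : Euc n) = x := by
  have h := (EuclideanSpace.basisFun (Fin n) ℝ).sum_repr x
  simpa [EuclideanSpace.basisFun_apply, EuclideanSpace.basisFun_repr] using h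

lemma euc_abs_coord_le_norm {n : ℕ} (x : Euc n) (i : Fin n) : |x i| ≤ ‖x‖ := by
  rw [EuclideanSpace.norm_eq]
  have h1 : |x i| = Real.sqrt (‖x i‖ ^ 2) := by
    rw [Real.sqrt_sq_eq_abs]; simp [abs_abs, Real.norm_eq_abs]
  rw [h1]
  apply Real.sqrt_le_sqrt
  exact Finset.single_le_sum (f := fun j => ‖x j‖ ^ 2) (fun j _ => sq_nonneg _)
    (Finset.mem_univ i)

lemma euc_norm_le_sum_abs {n : ℕ} (x : Euc n) : ‖x‖ ≤ ∑ i, |x i| := by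
  conv_lhs => rw [← euc_sum_single x]
  refine (norm_sum_le _ _).trans ?_
  apply Finset.sum_le_sum
  intro i _
  rw [norm_smul, EuclideanSpace.norm_single]
  simp [Real.norm_eq_abs]

lemma euc_opNorm_le {n : ℕ} (f : Euc n →L[ℝ] Euc n) (a : ℝ) (ha : 0 ≤ a)
    (h : ∀ i, ‖f (EuclideanSpace.single i 1)‖ ≤ a) : ‖f‖ ≤ n * a := by
  refine ContinuousLinearMap.opNorm_le_bound f (by positivity) fun x => ?_
  have hx : f x = ∑ i, x i • f (EuclideanSpace.single i 1) := by
    conv_lhs => rw [← euc_sum_single x]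
    rw [map_sum]
    simp
  rw [hx]
  refine (norm_sum_le _ _).trans ?_
  have : ∀ i ∈ Finset.univ, ‖x i • f (EuclideanSpace.single i 1)‖ ≤ a * ‖x‖ := by
    intro i _
    rw [norm_smul, Real.norm_eq_abs]
    calc |x i| * ‖f (EuclideanSpace.single i 1)‖ ≤ ‖x‖ * a :=
          mul_le_mul (euc_abs_coord_le_norm x i) (h i) (norm_nonneg _) (norm_nonneg _)
      _ = a * ‖x‖ := mul_comm _ _
  calc ∑ i, ‖x i • f (EuclideanSpace.single i 1)‖ ≤ ∑ _i : Fin n, a * ‖x‖ :=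
        Finset.sum_le_sum this
    _ = n * a * ‖x‖ := by
        rw [Finset.sum_const, Finset.card_univ, Fintype.card_fin, nsmul_eq_mul]; ring

lemma abs_adjugate_le {n : ℕ} (A : Matrix (Fin n) (Fin n) ℝ) (a : ℝ) (ha : 0 ≤ a)
    (h : ∀ i j, |A i j| ≤ a) (i j : Fin n) :
    |A.adjugate i j| ≤ (n.factorial : ℝ) * a ^ (n - 1) := by
  rw [Matrix.adjugate_apply, Matrix.det_apply']
  set B := A.updateRow j (Pi.single i 1) with hB
  have key : ∀ σ : Equiv.Perm (Fin n),
      |(Equiv.Perm.sign σ : ℤ) * ∏ k, B (σ k) k| ≤ a ^ (n - 1) := by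
    intro σ
    have hsign : |((Equiv.Perm.sign σ : ℤ) : ℝ)| = 1 := by
      rcases Int.units_eq_one_or (Equiv.Perm.sign σ) with hs | hs <;> simp [hs]
    rw [abs_mul]
    push_cast at hsign ⊢
    rw [hsign, one_mul, Finset.abs_prod]
    set k₀ := σ.symm j with hk₀
    have hmem : k₀ ∈ (Finset.univ : Finset (Fin n)) := Finset.mem_univ _
    rw [← Finset.mul_prod_erase _ _ hmem]
    have h1 : |B (σ k₀) k₀| ≤ 1 := by
      have : σ k₀ = j := Equiv.apply_symm_apply σ j
      rw [this, hB, Matrix.updateRow_self]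
      rw [Pi.single_apply]
      split <;> simp
    have h2 : ∏ k ∈ Finset.univ.erase k₀, |B (σ k) k| ≤ a ^ (n - 1) := by
      have hcard : (Finset.univ.erase k₀).card = n - 1 := by
        rw [Finset.card_erase_of_mem hmem]; simp
      calc ∏ k ∈ Finset.univ.erase k₀, |B (σ k) k|
          ≤ ∏ _k ∈ Finset.univ.erase k₀, a := by
            apply Finset.prod_le_prod (fun k _ => abs_nonneg _)
            intro k hk
            have hkne : k ≠ k₀ := Finset.ne_of_mem_erase hk
            have hσ : σ k ≠ j := by
              intro hc
              exact hkne (by rw [hk₀, ← hc, Equiv.symm_apply_apply])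
            rw [hB, Matrix.updateRow_ne hσ]
            exact h _ _
        _ = a ^ (n - 1) := by rw [Finset.prod_const, hcard]
    calc |B (σ k₀) k₀| * ∏ k ∈ Finset.univ.erase k₀, |B (σ k) k|
        ≤ 1 * (a ^ (n - 1)) := by
          apply mul_le_mul h1 h2 (Finset.prod_nonneg fun _ _ => abs_nonneg _) zero_le_one
      _ = a ^ (n - 1) := one_mul _
  calc |∑ σ : Equiv.Perm (Fin n), ((Equiv.Perm.sign σ : ℤ) : ℝ) * ∏ k, B (σ k) k|
      ≤ ∑ σ : Equiv.Perm (Fin n), |((Equiv.Perm.sign σ : ℤ) : ℝ) * ∏ k, B (σ k) k| :=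
        Finset.abs_sum_le_sum_abs _ _
    _ ≤ ∑ _σ : Equiv.Perm (Fin n), a ^ (n - 1) := Finset.sum_le_sum fun σ _ => by
        exact_mod_cast key σ
    _ = (n.factorial : ℝ) * a ^ (n - 1) := by
        rw [Finset.sum_const, Finset.card_univ, Fintype.card_perm, Fintype.card_fin,
          nsmul_eq_mul]

lemma refSimplex_interior_nonempty (n : ℕ) : (interior (refSimplex n)).Nonempty := by
  rw [refSimplex, interior_convexHull_nonempty_iff_affineSpan_eq_top]
  rw [← AffineSubspace.coe_eq_univ_iff]
  rw [affineSpan_insert_zero]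
  have : Submodule.span ℝ (Set.range fun i : Fin n =>
      (EuclideanSpace.single i 1 : Euc n)) = ⊤ := by
    have hb := (EuclideanSpace.basisFun (Fin n) ℝ).toBasis.span_eq
    have : ⇑(EuclideanSpace.basisFun (Fin n) ℝ).toBasis
        = fun i : Fin n => (EuclideanSpace.single i 1 : Euc n) := by
      funext i
      rw [OrthonormalBasis.coe_toBasis, EuclideanSpace.basisFun_apply]
    rwa [this] at hb
  rw [this]
  simp

theorem reference_transformation_bounds (n : ℕ) (C : ℝ) (hC : 0 < C) :
    ∃ cM CM : ℝ, 0 < cM ∧ 0 < CM ∧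
      ∀ v : Fin (n + 1) → Euc n, AffineIndependent ℝ v →
      ∀ T : Set (Euc n), T = convexHull ℝ (Set.range v) →
        Metric.diam T ^ n ≤ C * (volume T).toReal →
        ∀ (M Minv : Euc n →L[ℝ] Euc n) (b : Euc n),
          M.comp Minv = ContinuousLinearMap.id ℝ (Euc n) →
          Minv.comp M = ContinuousLinearMap.id ℝ (Euc n) →
          (fun x => M x + b) '' refSimplex n = T →
          ‖M‖ ≤ cM * Metric.diam T ∧ ‖Minv‖ ≤ CM * (Metric.diam T)⁻¹ := by
  classical
  set κ : ℝ := (volume (refSimplex n)).toReal with hκ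
  have hΔcompact : IsCompact (refSimplex n) := by
    apply Set.Finite.isCompact_convexHull
    exact (Set.finite_range _).insert 0
  have hκtop : volume (refSimplex n) ≠ ⊤ := hΔcompact.measure_lt_top.ne
  have hκpos : 0 < κ := by
    apply ENNReal.toReal_pos _ hκtop
    exact (Measure.measure_pos_of_nonempty_interior _ (refSimplex_interior_nonempty n)).ne'
  refine ⟨(n : ℝ) + 1, (n : ℝ) ^ 2 * (n.factorial : ℝ) * C * κ + 1, by positivity,
    by positivity, ?_⟩
  intro v hv T hT hvol M Minv b hMB hBM himg
  -- basic facts about T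
  have hTcompact : IsCompact T := by
    rw [hT]; apply Set.Finite.isCompact_convexHull; exact Set.finite_range v
  have hTbdd : Bornology.IsBounded T := hTcompact.isBounded
  have hmemT : ∀ x ∈ refSimplex n, M x + b ∈ T := by
    intro x hx
    rw [← himg]
    exact ⟨x, hx, rfl⟩
  have h0Δ : (0 : Euc n) ∈ refSimplex n :=
    subset_convexHull ℝ _ (Set.mem_insert _ _)
  have hsingleΔ : ∀ i : Fin n, (EuclideanSpace.single i 1 : Euc n) ∈ refSimplex n := by
    intro i
    exact subset_convexHull ℝ _ (Set.mem_insert_of_mem _ ⟨i, rfl⟩)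
  have hMei : ∀ i : Fin n, ‖M (EuclideanSpace.single i 1)‖ ≤ Metric.diam T := by
    intro i
    have h1 : M (EuclideanSpace.single i 1) + b ∈ T := hmemT _ (hsingleΔ i)
    have h2 : M 0 + b ∈ T := hmemT _ h0Δ
    have := Metric.dist_le_diam_of_mem hTbdd h1 h2
    rwa [dist_eq_norm, map_zero, zero_add, add_sub_cancel_right] at this
  have hdiam_nonneg : 0 ≤ Metric.diam T := Metric.diam_nonneg
  have hMnorm : ‖M‖ ≤ n * Metric.diam T := euc_opNorm_le M _ hdiam_nonneg hMei
  constructor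
  · calc ‖M‖ ≤ n * Metric.diam T := hMnorm
      _ ≤ ((n : ℝ) + 1) * Metric.diam T := by nlinarith
  -- Now the bound on Minv.
  rcases Nat.eq_zero_or_pos n with hn | hn
  · -- trivial case n = 0
    subst hn
    have : ∀ x : Euc 0, Minv x = 0 := fun x => by
      rw [Subsingleton.elim x 0, map_zero]
    have hMinv0 : ‖Minv‖ = 0 := by
      apply le_antisymm _ (norm_nonneg _)
      refine ContinuousLinearMap.opNorm_le_bound _ le_rfl fun x => ?_
      rw [this x, norm_zero, zero_mul]
    rw [hMinv0]
    positivity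
  -- n ≥ 1
  -- matrix setup
  set bE : Module.Basis (Fin n) ℝ (Euc n) := (EuclideanSpace.basisFun (Fin n) ℝ).toBasis with hbE
  set A : Matrix (Fin n) (Fin n) ℝ := LinearMap.toMatrix bE bE (M : Euc n →ₗ[ℝ] Euc n) with hA
  set Bm : Matrix (Fin n) (Fin n) ℝ :=
    LinearMap.toMatrix bE bE (Minv : Euc n →ₗ[ℝ] Euc n) with hBmdef
  have hbE_apply : ∀ i : Fin n, bE i = EuclideanSpace.single i 1 := by
    intro i
    rw [hbE, OrthonormalBasis.coe_toBasis, EuclideanSpace.basisFun_apply]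
  have hbE_repr : ∀ (x : Euc n) (i : Fin n), bE.repr x i = x i := by
    intro x i
    rw [hbE, OrthonormalBasis.coe_toBasis_repr_apply, EuclideanSpace.basisFun_repr]
  have hA_apply : ∀ i j, A i j = M (EuclideanSpace.single j 1) i := by
    intro i j
    rw [hA, LinearMap.toMatrix_apply, hbE_apply, hbE_repr]
    rfl
  have hBm_apply : ∀ i j, Bm i j = Minv (EuclideanSpace.single j 1) i := by
    intro i j
    rw [hBmdef, LinearMap.toMatrix_apply, hbE_apply, hbE_repr]
    rfl
  have hAB : A * Bm = 1 := by
    rw [hA, hBmdef, ← LinearMap.toMatrix_comp]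
    have : (M : Euc n →ₗ[ℝ] Euc n).comp (Minv : Euc n →ₗ[ℝ] Euc n)
        = LinearMap.id := by
      have := congrArg (ContinuousLinearMap.toLinearMap) hMB
      simpa using this
    rw [this, LinearMap.toMatrix_id]
  have hdet_eq : LinearMap.det (M : Euc n →ₗ[ℝ] Euc n) = A.det :=
    (LinearMap.det_toMatrix bE _).symm
  -- volume relation
  have hvolT : (volume T).toReal = |A.det| * κ := by
    have h1 : T = (fun y => y + b) '' ((M : Euc n → Euc n) '' refSimplex n) := by
      rw [← himg, Set.image_image]
    rw [h1, Set.image_add_right, measure_preimage_add_right,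
      Measure.addHaar_image_continuousLinearMap, hdet_eq, ENNReal.toReal_mul,
      ENNReal.toReal_ofReal (abs_nonneg _)]
  -- diam T > 0
  have hdiam_pos : 0 < Metric.diam T := by
    have h01 : v 0 ≠ v 1 := by
      intro hc
      have := hv.injective hc
      simp at this
      omega
    have hv0 : v 0 ∈ T := hT ▸ subset_convexHull ℝ _ ⟨0, rfl⟩
    have hv1 : v 1 ∈ T := hT ▸ subset_convexHull ℝ _ ⟨1, rfl⟩
    have := Metric.dist_le_diam_of_mem hTbdd hv0 hv1
    have hd : 0 < dist (v 0) (v 1) := dist_pos.mpr h01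
    linarith
  -- det lower bound
  have hdet_lb : Metric.diam T ^ n / (C * κ) ≤ |A.det| := by
    rw [div_le_iff₀ (by positivity)]
    calc Metric.diam T ^ n ≤ C * (volume T).toReal := hvol
      _ = C * (|A.det| * κ) := by rw [hvolT]
      _ = |A.det| * (C * κ) := by ring
  have hdet_pos : 0 < |A.det| := lt_of_lt_of_le (by positivity) hdet_lb
  -- Bm = A⁻¹
  have hBmInv : Bm = A⁻¹ := (Matrix.inv_eq_right_inv hAB).symm
  have hBm_entry : ∀ i j, |Bm i j| ≤ (n.factorial : ℝ) * C * κ / Metric.diam T := by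
    intro i j
    have hentryA : ∀ i j, |A i j| ≤ Metric.diam T := by
      intro i j
      rw [hA_apply]
      exact (euc_abs_coord_le_norm _ i).trans (hMei j)
    have hadj : |A.adjugate i j| ≤ (n.factorial : ℝ) * Metric.diam T ^ (n - 1) :=
      abs_adjugate_le A _ hdiam_nonneg hentryA i j
    have hBij : Bm i j = (A.det)⁻¹ * A.adjugate i j := by
      rw [hBmInv, Matrix.inv_def, Ring.inverse_eq_inv']
      simp [Matrix.smul_apply, smul_eq_mul]
    rw [hBij, abs_mul, abs_inv]
    have hinv_le : |A.det|⁻¹ ≤ C * κ / Metric.diam T ^ n := by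
      have h := inv_anti₀ (by positivity : (0:ℝ) < Metric.diam T ^ n / (C * κ)) hdet_lb
      rwa [inv_div] at h
    calc |A.det|⁻¹ * |A.adjugate i j|
        ≤ (C * κ / Metric.diam T ^ n) * ((n.factorial : ℝ) * Metric.diam T ^ (n - 1)) := by
          apply mul_le_mul hinv_le hadj (abs_nonneg _) (by positivity)
      _ = (n.factorial : ℝ) * C * κ / Metric.diam T := by
          have hpow : Metric.diam T ^ (n - 1)
              = Metric.diam T ^ n * (Metric.diam T)⁻¹ := by
            simpa using pow_sub₀ (Metric.diam T) hdiam_pos.ne' hn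
          rw [hpow]
          have h1 : Metric.diam T ^ n ≠ 0 := by positivity
          field_simp
  -- operator norm bound for Minv
  set β : ℝ := (n.factorial : ℝ) * C * κ / Metric.diam T with hβ
  have hβnonneg : 0 ≤ β := by positivity
  have hMinvei : ∀ j, ‖Minv (EuclideanSpace.single j 1)‖ ≤ n * β := by
    intro j
    calc ‖Minv (EuclideanSpace.single j 1)‖
        ≤ ∑ i, |Minv (EuclideanSpace.single j 1) i| := euc_norm_le_sum_abs _
      _ ≤ ∑ _i : Fin n, β := Finset.sum_le_sum fun i _ => by
          rw [← hBm_apply]; exact hBm_entry i j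
      _ = n * β := by rw [Finset.sum_const]; simp
  have hMinvnorm : ‖Minv‖ ≤ n * (n * β) :=
    euc_opNorm_le Minv _ (by positivity) hMinvei
  calc ‖Minv‖ ≤ n * (n * β) := hMinvnorm
    _ = (n : ℝ) ^ 2 * (n.factorial : ℝ) * C * κ * (Metric.diam T)⁻¹ := by
        rw [hβ]; field_simp
    _ ≤ ((n : ℝ) ^ 2 * (n.factorial : ℝ) * C * κ + 1) * (Metric.diam T)⁻¹ := by
        apply mul_le_mul_of_nonneg_right _ (by positivity)
        linarith

end
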